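/- Let C be a complex T×N matrix with T < N of the form C = [C_sub 0], where C_sub is T×T with rank(C_sub) = T. Then the real vector space of T×N complex matrices Y satisfying C^H Y + Y^H C = 0 (viewed as a real vector space under entrywise real/imaginary coordinates) has dimension exactly T². -/

import Mathlib

open Matrix

/-- The real-linear map `Y ↦ Cᴴ Y + Yᴴ C` encoding the quasi-orthogonality
constraint system. -/
noncomputable def qocMap {T N : ℕ} (C : Matrix (Fin T) (Fin N) ℂ) :
    Matrix (Fin T) (Fin N) ℂ →ₗ[ℝ] Matrix (Fin N) (Fin N) ℂ where
  toFun Y := Cᴴ * Y + Yᴴ * C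
  map_add' Y Z := by
    simp [Matrix.conjTranspose_add, Matrix.mul_add, Matrix.add_mul]
    abel
  map_smul' r Y := by
    simp [Matrix.conjTranspose_smul, Matrix.mul_smul, Matrix.smul_mul, smul_add]

/-- Extension of a `T×T` matrix to a `T×N` matrix by zero columns. -/
def extLin (T N : ℕ) : Matrix (Fin T) (Fin T) ℂ →ₗ[ℝ] Matrix (Fin T) (Fin N) ℂ where
  toFun B := Matrix.of fun t n => if h : (n : ℕ) < T then B t ⟨n, h⟩ else 0
  map_add' B B' := by
    ext t n
    by_cases h : (n : ℕ) < T <;> simp [h]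
  map_smul' r B := by
    ext t n
    by_cases h : (n : ℕ) < T <;> simp [h]

lemma extLin_apply_lt {T N : ℕ} (B : Matrix (Fin T) (Fin T) ℂ) (t : Fin T) (n : Fin N)
    (h : (n : ℕ) < T) : extLin T N B t n = B t ⟨n, h⟩ := by
  simp [extLin, h]

lemma extLin_apply_not_lt {T N : ℕ} (B : Matrix (Fin T) (Fin T) ℂ) (t : Fin T) (n : Fin N)
    (h : ¬ (n : ℕ) < T) : extLin T N B t n = 0 := by
  simp [extLin, h]

/-- The real-linear equivalence `selfAdjoint ≃ skewAdjoint` for complex matrices,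
given by multiplication by `I`. -/
noncomputable def selfSkewEquiv (T : ℕ) :
    (selfAdjoint.submodule ℝ (Matrix (Fin T) (Fin T) ℂ)) ≃ₗ[ℝ]
      (skewAdjoint.submodule ℝ (Matrix (Fin T) (Fin T) ℂ)) where
  toFun x := ⟨Complex.I • (x : Matrix (Fin T) (Fin T) ℂ), by
    have hx : star (x : Matrix (Fin T) (Fin T) ℂ) = x := x.2
    show _ ∈ skewAdjoint _
    rw [skewAdjoint.mem_iff, star_smul, hx, Complex.star_def, Complex.conj_I, neg_smul]⟩
  invFun y := ⟨(-Complex.I) • (y : Matrix (Fin T) (Fin T) ℂ), by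
    have hy : star (y : Matrix (Fin T) (Fin T) ℂ) = -y := y.2
    show _ ∈ selfAdjoint _
    rw [selfAdjoint.mem_iff, star_smul, hy]
    simp [Complex.star_def, Complex.conj_I]⟩
  map_add' x y := by
    ext : 1
    show Complex.I • ((x : Matrix (Fin T) (Fin T) ℂ) + y) = Complex.I • (x : Matrix (Fin T) (Fin T) ℂ) + Complex.I • (y : Matrix (Fin T) (Fin T) ℂ)
    rw [smul_add]
  map_smul' r x := by
    ext : 1
    show Complex.I • (r • (x : Matrix (Fin T) (Fin T) ℂ)) = r • (Complex.I • (x : Matrix (Fin T) (Fin T) ℂ))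
    rw [smul_comm]
  left_inv x := by
    ext : 1
    show (-Complex.I) • (Complex.I • (x : Matrix (Fin T) (Fin T) ℂ)) = x
    rw [smul_smul]
    norm_num
  right_inv y := by
    ext : 1
    show Complex.I • ((-Complex.I) • (y : Matrix (Fin T) (Fin T) ℂ)) = y
    rw [smul_smul]
    norm_num

lemma finrank_skewAdjoint_matrix (T : ℕ) :
    Module.finrank ℝ (skewAdjoint.submodule ℝ (Matrix (Fin T) (Fin T) ℂ)) = T ^ 2 := by
  have hcompl : IsCompl (selfAdjoint.submodule ℝ (Matrix (Fin T) (Fin T) ℂ))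
      (skewAdjoint.submodule ℝ (Matrix (Fin T) (Fin T) ℂ)) := by
    constructor
    · rw [Submodule.disjoint_def]
      intro x hx hx'
      have h1 : star x = x := hx
      have h2 : star x = -x := hx'
      rw [h1] at h2
      have h4 : x + x = 0 := by
        nth_rewrite 2 [h2]
        exact add_neg_cancel x
      have h3 : (2 : ℝ) • x = 0 := by
        rw [two_smul, h4]
      rcases smul_eq_zero.mp h3 with h | h
      · norm_num at h
      · exact h
    · rw [codisjoint_iff, eq_top_iff]
      rintro x -
      rw [Submodule.mem_sup]
      refine ⟨(1/2 : ℝ) • (x + star x), ?_, (1/2 : ℝ) • (x - star x), ?_, ?_⟩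
      · show _ ∈ selfAdjoint _
        rw [selfAdjoint.mem_iff, star_smul, star_trivial, star_add, star_star, add_comm]
      · show _ ∈ skewAdjoint _
        rw [skewAdjoint.mem_iff, star_smul, star_trivial, star_sub, star_star, ← smul_neg,
          neg_sub]
      · rw [← smul_add]
        have : x + star x + (x - star x) = (2 : ℝ) • x := by
          rw [two_smul]; abel
        rw [this, smul_smul]
        norm_num
  have hsum := Submodule.finrank_add_eq_of_isCompl hcompl
  have hA : Module.finrank ℝ (Matrix (Fin T) (Fin T) ℂ) = T * T * 2 := by
    rw [Module.finrank_matrix, Complex.finrank_real_complex, Fintype.card_fin]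
  rw [hA] at hsum
  have heq := (selfSkewEquiv T).finrank_eq
  have hp : T ^ 2 = T * T := pow_two T
  omega

/-- If `T < N` and `C = [C_sub 0]` with `C_sub` an invertible (rank `T`) `T×T`
block, then the real solution space of `Cᴴ Y + Yᴴ C = 0` has dimension exactly `T²`. -/
theorem stmt6 (T N : ℕ) (hTN : T < N) (Csub : Matrix (Fin T) (Fin T) ℂ)
    (hrank : Csub.rank = T) (C : Matrix (Fin T) (Fin N) ℂ)
    (hC : ∀ t n, C t n = if h : (n : ℕ) < T then Csub t ⟨n, h⟩ else 0) :
    Module.finrank ℝ (LinearMap.ker (qocMap C)) = T ^ 2 := by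
  classical
  -- `Csub` is invertible
  have hsur : Function.Surjective Csub.mulVecLin := by
    rw [← LinearMap.range_eq_top]
    apply Submodule.eq_top_of_finrank_eq
    rw [Module.finrank_pi]
    simpa [Matrix.rank] using hrank
  have hinj : Function.Injective Csub.mulVecLin :=
    (LinearMap.injective_iff_surjective).mpr hsur
  have hU : IsUnit Csub := by
    rw [← Matrix.mulVec_injective_iff_isUnit]
    simpa [← Matrix.coe_mulVecLin] using hinj
  have hUdet : IsUnit Csubᴴ.det := by
    rw [← Matrix.isUnit_iff_isUnit_det, Matrix.isUnit_conjTranspose]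
    exact hU
  have hD1 : Csubᴴ * Csubᴴ⁻¹ = 1 := Matrix.mul_nonsing_inv Csubᴴ hUdet
  have hD2 : Csubᴴ⁻¹ * Csubᴴ = 1 := Matrix.nonsing_inv_mul Csubᴴ hUdet
  have hTle : T ≤ N := hTN.le
  set e : Fin T → Fin N := Fin.castLE hTle with he
  have heval : ∀ i : Fin T, ((e i : Fin N) : ℕ) = (i : ℕ) := fun i => rfl
  have hee : ∀ (i : Fin T) (h : ((e i : Fin N) : ℕ) < T), (⟨(e i : Fin N), h⟩ : Fin T) = i :=
    fun i h => Fin.ext rfl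
  -- key entry formula
  have hCY : ∀ (Y : Matrix (Fin T) (Fin N) ℂ) (i : Fin N) (j : Fin N),
      (Cᴴ * Y) i j = if h : (i : ℕ) < T then (Csubᴴ * Y) ⟨i, h⟩ j else 0 := by
    intro Y i j
    by_cases h : (i : ℕ) < T
    · simp only [h, dif_pos, Matrix.mul_apply, Matrix.conjTranspose_apply]
      congr 1
      ext t
      rw [hC t i]
      simp [h]
    · simp only [h, dif_neg, not_false_iff, Matrix.mul_apply, Matrix.conjTranspose_apply]
      apply Finset.sum_eq_zero
      intro t _
      rw [hC t i]
      simp [h]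
  have hYC : ∀ (Y : Matrix (Fin T) (Fin N) ℂ) (i : Fin N) (j : Fin N),
      (Yᴴ * C) i j = star ((Cᴴ * Y) j i) := by
    intro Y i j
    simp only [Matrix.mul_apply, Matrix.conjTranspose_apply, star_sum, star_mul', star_star]
    exact Finset.sum_congr rfl fun t _ => mul_comm _ _
  -- the injective linear map from T×T matrices
  let G : Matrix (Fin T) (Fin T) ℂ →ₗ[ℝ] Matrix (Fin T) (Fin N) ℂ :=
    { toFun := fun B => Csubᴴ⁻¹ * extLin T N B
      map_add' := fun B B' => by
        show Csubᴴ⁻¹ * extLin T N (B + B') = Csubᴴ⁻¹ * extLin T N B + Csubᴴ⁻¹ * extLin T N B'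
        rw [map_add, Matrix.mul_add]
      map_smul' := fun r B => by
        show Csubᴴ⁻¹ * extLin T N (r • B) = r • (Csubᴴ⁻¹ * extLin T N B)
        rw [LinearMap.map_smul, Matrix.mul_smul] }
  have hGrec : ∀ B, Csubᴴ * G B = extLin T N B := by
    intro B
    show Csubᴴ * (Csubᴴ⁻¹ * extLin T N B) = _
    rw [← Matrix.mul_assoc, hD1, Matrix.one_mul]
  have hGinj : Function.Injective G := by
    intro B B' hBB
    have h2 : extLin T N B = extLin T N B' := by
      rw [← hGrec B, ← hGrec B', hBB]
    ext i j
    have h3 := congrFun (congrFun h2 i) (e j)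
    rwa [extLin_apply_lt B i (e j) j.2, extLin_apply_lt B' i (e j) j.2, hee j j.2] at h3
  -- the kernel is the image of the skew-adjoint matrices under G
  have hker : LinearMap.ker (qocMap C) =
      Submodule.map G (skewAdjoint.submodule ℝ (Matrix (Fin T) (Fin T) ℂ)) := by
    apply le_antisymm
    · intro Y hY
      rw [LinearMap.mem_ker] at hY
      have hY' : ∀ i j, (Cᴴ * Y) i j + (Yᴴ * C) i j = 0 := by
        intro i j
        have := congrFun (congrFun hY i) j
        simpa [qocMap] using this
      have h1 : ∀ i j : Fin T, (Csubᴴ * Y) i (e j) + star ((Csubᴴ * Y) j (e i)) = 0 := by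
        intro i j
        have h := hY' (e i) (e j)
        rwa [hYC, hCY, hCY, dif_pos (show ((e i : Fin N) : ℕ) < T from i.2),
          dif_pos (show ((e j : Fin N) : ℕ) < T from j.2), hee i i.2, hee j j.2] at h
      have h2 : ∀ (i : Fin T) (j : Fin N), ¬ (j : ℕ) < T → (Csubᴴ * Y) i j = 0 := by
        intro i j hj
        have h := hY' (e i) j
        rwa [hYC, hCY, hCY, dif_pos (show ((e i : Fin N) : ℕ) < T from i.2), hee i i.2,
          dif_neg hj, star_zero, add_zero] at h
      refine ⟨Matrix.of fun i j => (Csubᴴ * Y) i (e j), ?_, ?_⟩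
      · show _ ∈ skewAdjoint _
        rw [skewAdjoint.mem_iff]
        ext i j
        simp only [Matrix.neg_apply, Matrix.conjTranspose_apply, Matrix.of_apply]
        exact eq_neg_of_add_eq_zero_left (by rw [add_comm]; exact h1 i j)
      · show Csubᴴ⁻¹ * extLin T N _ = Y
        have hext : extLin T N (Matrix.of fun i j => (Csubᴴ * Y) i (e j)) = Csubᴴ * Y := by
          ext i j
          by_cases hj : (j : ℕ) < T
          · rw [extLin_apply_lt _ i j hj]
            show (Csubᴴ * Y) i (e ⟨j, hj⟩) = (Csubᴴ * Y) i j
            congr 1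
          · rw [extLin_apply_not_lt _ i j hj]
            exact (h2 i j hj).symm
        rw [hext, ← Matrix.mul_assoc, hD2, Matrix.one_mul]
    · rintro _ ⟨B, hB, rfl⟩
      rw [LinearMap.mem_ker]
      have hskew : Bᴴ = -B := hB
      have hDG : Csubᴴ * G B = extLin T N B := hGrec B
      ext i j
      show (Cᴴ * G B) i j + ((G B)ᴴ * C) i j = 0
      rw [hYC, hCY, hCY, hDG]
      by_cases hi : (i : ℕ) < T
      · by_cases hj : (j : ℕ) < T
        · rw [dif_pos hi, dif_pos hj, extLin_apply_lt B _ j hj, extLin_apply_lt B _ i hi]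
          have h5 := congrFun (congrFun hskew ⟨i, hi⟩) ⟨j, hj⟩
          simp only [Matrix.conjTranspose_apply, Matrix.neg_apply] at h5
          rw [h5]
          ring
        · rw [dif_pos hi, dif_neg hj, extLin_apply_not_lt B _ j hj]
          simp
      · rw [dif_neg hi]
        by_cases hj : (j : ℕ) < T
        · rw [dif_pos hj, extLin_apply_not_lt B _ i hi]
          simp
        · rw [dif_neg hj]
          simp
  rw [hker, ← finrank_skewAdjoint_matrix T]
  exact (Submodule.equivMapOfInjective G hGinj _).finrank_eq.symm
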